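/- Let p be a prime, R an F_p-algebra, λ, a, c, d ∈ R with a^p + λ^p c invertible in R, and let D̃ = R[U,V]/(U^p − c, V^p − d), A = R[X,Y]/(X^p, Y^p) (the Hopf algebra of G^{(λ)}_R). Then the R-algebra homomorphism r̃: D̃ ⊗_R D̃ → D̃ ⊗_R A determined by U⊗1 ↦ U⊗1, V⊗1 ↦ V⊗1, 1⊗U ↦ U⊗1 + (a+λU)⊗X, 1⊗V ↦ V⊗1 + (a+λU)⊗Y is well defined (it respects the relations U^p = c, V^p = d in the second factor) and bijective, with inverse sending 1⊗X ↦ (1⊗U − U⊗1)·((a+λU)^{−1}⊗1) and 1⊗Y ↦ (1⊗V − V⊗1)·((a+λU)^{−1}⊗1). Hence Spec D̃ is a G^{(λ)}_R-torsor over Spec R. -/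

import Mathlib

open scoped TensorProduct

set_option maxHeartbeats 1000000
set_option synthInstance.maxHeartbeats 400000

noncomputable section

/-- The algebra `D̃ = R[U,V]/(U^p - c, V^p - d)`. -/
abbrev Dt (p : ℕ) (R : Type*) [CommRing R] (c d : R) : Type _ :=
  MvPolynomial (Fin 2) R ⧸
    Ideal.span ({MvPolynomial.X 0 ^ p - MvPolynomial.C c,
      MvPolynomial.X 1 ^ p - MvPolynomial.C d} : Set (MvPolynomial (Fin 2) R))

/-- The class of `U` in `D̃`. -/
def dU (p : ℕ) (R : Type*) [CommRing R] (c d : R) : Dt p R c d :=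
  Ideal.Quotient.mk _ (MvPolynomial.X 0)

/-- The class of `V` in `D̃`. -/
def dV (p : ℕ) (R : Type*) [CommRing R] (c d : R) : Dt p R c d :=
  Ideal.Quotient.mk _ (MvPolynomial.X 1)

/-- The Hopf algebra `A = R[X,Y]/(X^p, Y^p)` of `G^{(λ)}_R`. -/
abbrev Aq (p : ℕ) (R : Type*) [CommRing R] : Type _ :=
  MvPolynomial (Fin 2) R ⧸
    Ideal.span ({MvPolynomial.X 0 ^ p, MvPolynomial.X 1 ^ p} :
      Set (MvPolynomial (Fin 2) R))

/-- The class of `X` in `A`. -/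
def aX (p : ℕ) (R : Type*) [CommRing R] : Aq p R :=
  Ideal.Quotient.mk _ (MvPolynomial.X 0)

/-- The class of `Y` in `A`. -/
def aY (p : ℕ) (R : Type*) [CommRing R] : Aq p R :=
  Ideal.Quotient.mk _ (MvPolynomial.X 1)

namespace Stmt13Aux

open Algebra.TensorProduct

/-- Freshman's dream in a commutative ring where `p = 0`. -/
theorem fadd {p : ℕ} (hp : p.Prime) {S : Type*} [CommRing S] (hS : (p : S) = 0)
    (x y : S) : (x + y) ^ p = x ^ p + y ^ p := by
  rw [add_pow_prime_eq hp, hS]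
  ring

theorem fneg {p : ℕ} (hp : p.Prime) {S : Type*} [CommRing S] (hS : (p : S) = 0)
    (y : S) : (-y) ^ p = -(y ^ p) := by
  have h := fadd hp hS (-y) y
  rw [neg_add_cancel, zero_pow hp.ne_zero] at h
  exact eq_neg_of_add_eq_zero_left h.symm

theorem fsub {p : ℕ} (hp : p.Prime) {S : Type*} [CommRing S] (hS : (p : S) = 0)
    (x y : S) : (x - y) ^ p = x ^ p - y ^ p := by
  rw [sub_eq_add_neg, fadd hp hS, fneg hp hS, ← sub_eq_add_neg]

section Main

variable (p : ℕ) (R : Type*) [CommRing R] (lam a c d : R)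

abbrev dtAlg : Algebra R (Dt p R c d) := Ideal.instAlgebraQuotient R _

attribute [local instance] dtAlg

abbrev dtSemiring : Semiring (Dt p R c d) := Ideal.Quotient.semiring _

attribute [local instance] dtSemiring

abbrev aqSemiring : Semiring (Aq p R) := Ideal.Quotient.semiring _

attribute [local instance] aqSemiring

abbrev aqAlg : Algebra R (Aq p R) := Ideal.instAlgebraQuotient R _

attribute [local instance] aqAlg

/-- The element `a + λ U` of `D̃`. -/
def alD : Dt p R c d :=
  algebraMap R (Dt p R c d) a + algebraMap R (Dt p R c d) lam * dU p R c d

theorem dU_pow : dU p R c d ^ p = algebraMap R (Dt p R c d) c := by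
  have h : (Ideal.Quotient.mk _ : MvPolynomial (Fin 2) R →+* Dt p R c d)
      (MvPolynomial.X 0 ^ p - MvPolynomial.C c) = 0 :=
    Ideal.Quotient.eq_zero_iff_mem.2 (Ideal.subset_span (Set.mem_insert _ _))
  rw [map_sub, map_pow, sub_eq_zero] at h
  rw [dU, h]; rfl

theorem dV_pow : dV p R c d ^ p = algebraMap R (Dt p R c d) d := by
  have h : (Ideal.Quotient.mk _ : MvPolynomial (Fin 2) R →+* Dt p R c d)
      (MvPolynomial.X 1 ^ p - MvPolynomial.C d) = 0 :=
    Ideal.Quotient.eq_zero_iff_mem.2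
      (Ideal.subset_span (Set.mem_insert_of_mem _ rfl))
  rw [map_sub, map_pow, sub_eq_zero] at h
  rw [dV, h]; rfl

theorem aX_pow : aX p R ^ p = 0 := by
  rw [aX, ← map_pow]
  exact Ideal.Quotient.eq_zero_iff_mem.2 (Ideal.subset_span (Set.mem_insert _ _))

theorem aY_pow : aY p R ^ p = 0 := by
  rw [aY, ← map_pow]
  exact Ideal.Quotient.eq_zero_iff_mem.2
    (Ideal.subset_span (Set.mem_insert_of_mem _ rfl))

variable [CharP R p]

theorem pzero (S : Type*) [CommRing S] [Algebra R S] : ((p : ℕ) : S) = 0 := by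
  rw [← map_natCast (algebraMap R S), CharP.cast_eq_zero, map_zero]



theorem alD_pow (hp : p.Prime) :
    alD p R lam a c d ^ p = algebraMap R (Dt p R c d) (a ^ p + lam ^ p * c) := by
  rw [alD, fadd hp (pzero p R _), mul_pow, ← map_pow, ← map_pow, dU_pow, ← map_mul,
    ← map_add]

theorem alD_isUnit (hp : p.Prime) (hu : IsUnit (a ^ p + lam ^ p * c)) :
    IsUnit (alD p R lam a c d) := by
  rw [← isUnit_pow_iff hp.ne_zero, alD_pow p R lam a c d hp]
  exact hu.map (algebraMap R (Dt p R c d))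

/-- The polynomial map underlying the second factor of `r̃`. -/
def εr : MvPolynomial (Fin 2) R →ₐ[R] Dt p R c d ⊗[R] Aq p R :=
  MvPolynomial.aeval (R := R) (S₁ := Dt p R c d ⊗[R] Aq p R)
    ![dU p R c d ⊗ₜ[R] 1 + alD p R lam a c d ⊗ₜ[R] aX p R,
      dV p R c d ⊗ₜ[R] 1 + alD p R lam a c d ⊗ₜ[R] aY p R]

theorem εr_X0 : εr p R lam a c d (MvPolynomial.X 0) =
    dU p R c d ⊗ₜ[R] 1 + alD p R lam a c d ⊗ₜ[R] aX p R := by simp [εr]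

theorem εr_X1 : εr p R lam a c d (MvPolynomial.X 1) =
    dV p R c d ⊗ₜ[R] 1 + alD p R lam a c d ⊗ₜ[R] aY p R := by simp [εr]

theorem εr_ker (hp : p.Prime) : ∀ q ∈ Ideal.span ({MvPolynomial.X 0 ^ p - MvPolynomial.C c,
    MvPolynomial.X 1 ^ p - MvPolynomial.C d} : Set (MvPolynomial (Fin 2) R)),
    εr p R lam a c d q = 0 := by
  intro q hq
  have hle : Ideal.span ({MvPolynomial.X 0 ^ p - MvPolynomial.C c,
      MvPolynomial.X 1 ^ p - MvPolynomial.C d} : Set (MvPolynomial (Fin 2) R)) ≤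
      RingHom.ker (εr p R lam a c d).toRingHom := by
    rw [Ideal.span_le]
    rintro q (rfl | rfl)
    · show εr p R lam a c d _ = 0
      have hC : εr p R lam a c d (MvPolynomial.C c) =
          algebraMap R (Dt p R c d) c ⊗ₜ[R] (1 : Aq p R) :=
        (εr p R lam a c d).commutes c
      calc εr p R lam a c d (MvPolynomial.X 0 ^ p - MvPolynomial.C c)
          = εr p R lam a c d (MvPolynomial.X 0 ^ p) -
            εr p R lam a c d (MvPolynomial.C c) := map_sub _ _ _
        _ = εr p R lam a c d (MvPolynomial.X 0) ^ p -
            εr p R lam a c d (MvPolynomial.C c) :=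
          congrArg (fun z => z - εr p R lam a c d (MvPolynomial.C c))
            (map_pow _ _ _)
        _ = (dU p R c d ⊗ₜ[R] (1 : Aq p R) + alD p R lam a c d ⊗ₜ[R] aX p R) ^ p -
            εr p R lam a c d (MvPolynomial.C c) := by rw [εr_X0]
        _ = ((dU p R c d ⊗ₜ[R] (1 : Aq p R)) ^ p +
              (alD p R lam a c d ⊗ₜ[R] aX p R) ^ p) -
            εr p R lam a c d (MvPolynomial.C c) :=
          congrArg (fun z => z - εr p R lam a c d (MvPolynomial.C c))
            (fadd hp (pzero p R (Dt p R c d ⊗[R] Aq p R))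
              (dU p R c d ⊗ₜ[R] (1 : Aq p R)) (alD p R lam a c d ⊗ₜ[R] aX p R))
        _ = (((dU p R c d ^ p) ⊗ₜ[R] ((1 : Aq p R) ^ p)) +
              ((alD p R lam a c d ^ p) ⊗ₜ[R] (aX p R ^ p))) -
            εr p R lam a c d (MvPolynomial.C c) :=
          congrArg (fun z => z - εr p R lam a c d (MvPolynomial.C c))
            (congrArg₂ (· + ·) (Algebra.TensorProduct.tmul_pow _ _ p)
              (Algebra.TensorProduct.tmul_pow _ _ p))
        _ = ((algebraMap R (Dt p R c d) c ⊗ₜ[R] (1 : Aq p R)) +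
              ((alD p R lam a c d ^ p) ⊗ₜ[R] (0 : Aq p R))) -
            εr p R lam a c d (MvPolynomial.C c) := by
          rw [dU_pow, one_pow, aX_pow]
        _ = 0 := by rw [TensorProduct.tmul_zero, add_zero, hC, sub_self]
    · show εr p R lam a c d _ = 0
      have hC : εr p R lam a c d (MvPolynomial.C d) =
          algebraMap R (Dt p R c d) d ⊗ₜ[R] (1 : Aq p R) :=
        (εr p R lam a c d).commutes d
      calc εr p R lam a c d (MvPolynomial.X 1 ^ p - MvPolynomial.C d)
          = εr p R lam a c d (MvPolynomial.X 1 ^ p) -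
            εr p R lam a c d (MvPolynomial.C d) := map_sub _ _ _
        _ = εr p R lam a c d (MvPolynomial.X 1) ^ p -
            εr p R lam a c d (MvPolynomial.C d) :=
          congrArg (fun z => z - εr p R lam a c d (MvPolynomial.C d))
            (map_pow _ _ _)
        _ = (dV p R c d ⊗ₜ[R] (1 : Aq p R) + alD p R lam a c d ⊗ₜ[R] aY p R) ^ p -
            εr p R lam a c d (MvPolynomial.C d) := by rw [εr_X1]
        _ = ((dV p R c d ⊗ₜ[R] (1 : Aq p R)) ^ p +
              (alD p R lam a c d ⊗ₜ[R] aY p R) ^ p) -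
            εr p R lam a c d (MvPolynomial.C d) :=
          congrArg (fun z => z - εr p R lam a c d (MvPolynomial.C d))
            (fadd hp (pzero p R (Dt p R c d ⊗[R] Aq p R))
              (dV p R c d ⊗ₜ[R] (1 : Aq p R)) (alD p R lam a c d ⊗ₜ[R] aY p R))
        _ = (((dV p R c d ^ p) ⊗ₜ[R] ((1 : Aq p R) ^ p)) +
              ((alD p R lam a c d ^ p) ⊗ₜ[R] (aY p R ^ p))) -
            εr p R lam a c d (MvPolynomial.C d) :=
          congrArg (fun z => z - εr p R lam a c d (MvPolynomial.C d))
            (congrArg₂ (· + ·) (Algebra.TensorProduct.tmul_pow _ _ p)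
              (Algebra.TensorProduct.tmul_pow _ _ p))
        _ = ((algebraMap R (Dt p R c d) d ⊗ₜ[R] (1 : Aq p R)) +
              ((alD p R lam a c d ^ p) ⊗ₜ[R] (0 : Aq p R))) -
            εr p R lam a c d (MvPolynomial.C d) := by
          rw [dV_pow, one_pow, aY_pow]
        _ = 0 := by rw [TensorProduct.tmul_zero, add_zero, hC, sub_self]
  exact hle hq

/-- The second factor of `r̃`. -/
def gMap (hp : p.Prime) : Dt p R c d →ₐ[R] Dt p R c d ⊗[R] Aq p R :=
  Ideal.Quotient.liftₐ _ (εr p R lam a c d) (εr_ker p R lam a c d hp)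

theorem gMap_U (hp : p.Prime) : gMap p R lam a c d hp (dU p R c d) =
    dU p R c d ⊗ₜ[R] 1 + alD p R lam a c d ⊗ₜ[R] aX p R := by
  rw [← εr_X0, gMap, dU, Ideal.Quotient.liftₐ_apply]; rfl

theorem gMap_V (hp : p.Prime) : gMap p R lam a c d hp (dV p R c d) =
    dV p R c d ⊗ₜ[R] 1 + alD p R lam a c d ⊗ₜ[R] aY p R := by
  rw [← εr_X1, gMap, dV, Ideal.Quotient.liftₐ_apply]; rfl

/-- The map `r̃`. -/
def rtMap (hp : p.Prime) : Dt p R c d ⊗[R] Dt p R c d →ₐ[R] Dt p R c d ⊗[R] Aq p R :=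
  productMap (S := Dt p R c d ⊗[R] Aq p R) (includeLeft : Dt p R c d →ₐ[R] Dt p R c d ⊗[R] Aq p R)
    (gMap p R lam a c d hp)

theorem rtMap_tmul (hp : p.Prime) (s t : Dt p R c d) :
    rtMap p R lam a c d hp (s ⊗ₜ[R] t) = (s ⊗ₜ[R] (1 : Aq p R)) * gMap p R lam a c d hp t :=
  productMap_apply_tmul _ _ _ _

theorem rtMap_left (hp : p.Prime) (s : Dt p R c d) :
    rtMap p R lam a c d hp (s ⊗ₜ[R] 1) = s ⊗ₜ[R] 1 := by
  rw [rtMap_tmul, map_one]; exact mul_one (s ⊗ₜ[R] (1 : Aq p R))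

theorem rtMap_U (hp : p.Prime) : rtMap p R lam a c d hp ((1 : Dt p R c d) ⊗ₜ[R] dU p R c d) =
    dU p R c d ⊗ₜ[R] 1 + alD p R lam a c d ⊗ₜ[R] aX p R := by
  rw [rtMap_tmul, gMap_U, ← one_def]
  exact one_mul (dU p R c d ⊗ₜ[R] (1 : Aq p R) + alD p R lam a c d ⊗ₜ[R] aX p R)

theorem rtMap_V (hp : p.Prime) : rtMap p R lam a c d hp ((1 : Dt p R c d) ⊗ₜ[R] dV p R c d) =
    dV p R c d ⊗ₜ[R] 1 + alD p R lam a c d ⊗ₜ[R] aY p R := by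
  rw [rtMap_tmul, gMap_V, ← one_def]
  exact one_mul (dV p R c d ⊗ₜ[R] (1 : Aq p R) + alD p R lam a c d ⊗ₜ[R] aY p R)

/-- The inverse of `a + λU` in `D̃`. -/
def betD (hp : p.Prime) (hu : IsUnit (a ^ p + lam ^ p * c)) : Dt p R c d := ↑(alD_isUnit p R lam a c d hp hu).unit⁻¹

theorem alD_mul_betD (hp : p.Prime) (hu : IsUnit (a ^ p + lam ^ p * c)) : alD p R lam a c d * betD p R lam a c d hp hu = 1 :=
  (alD_isUnit p R lam a c d hp hu).mul_val_inv

/-- The image of `X` under the inverse map. -/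
def ξD (hp : p.Prime) (hu : IsUnit (a ^ p + lam ^ p * c)) : Dt p R c d ⊗[R] Dt p R c d :=
  ((1 : Dt p R c d) ⊗ₜ[R] dU p R c d - dU p R c d ⊗ₜ[R] 1) *
    (betD p R lam a c d hp hu ⊗ₜ[R] 1)

/-- The image of `Y` under the inverse map. -/
def ηD (hp : p.Prime) (hu : IsUnit (a ^ p + lam ^ p * c)) : Dt p R c d ⊗[R] Dt p R c d :=
  ((1 : Dt p R c d) ⊗ₜ[R] dV p R c d - dV p R c d ⊗ₜ[R] 1) *
    (betD p R lam a c d hp hu ⊗ₜ[R] 1)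

/-- The polynomial map underlying the second factor of the inverse. -/
def ε'r (hp : p.Prime) (hu : IsUnit (a ^ p + lam ^ p * c)) : MvPolynomial (Fin 2) R →ₐ[R] Dt p R c d ⊗[R] Dt p R c d :=
  MvPolynomial.aeval (R := R) (S₁ := Dt p R c d ⊗[R] Dt p R c d)
    ![ξD p R lam a c d hp hu, ηD p R lam a c d hp hu]

theorem ε'r_X0 (hp : p.Prime) (hu : IsUnit (a ^ p + lam ^ p * c)) : ε'r p R lam a c d hp hu (MvPolynomial.X 0) =
    ξD p R lam a c d hp hu := by simp [ε'r]

theorem ε'r_X1 (hp : p.Prime) (hu : IsUnit (a ^ p + lam ^ p * c)) : ε'r p R lam a c d hp hu (MvPolynomial.X 1) =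
    ηD p R lam a c d hp hu := by simp [ε'r]

theorem diff_pow (hp : p.Prime) (w : Dt p R c d) (e : R) (hw : w ^ p = algebraMap R _ e) :
    ((1 : Dt p R c d) ⊗ₜ[R] w - w ⊗ₜ[R] (1 : Dt p R c d)) ^ p = 0 := by
  have h1 : (1 : Dt p R c d) ⊗ₜ[R] algebraMap R (Dt p R c d) e =
      algebraMap R (Dt p R c d) e ⊗ₜ[R] (1 : Dt p R c d) :=
    (Algebra.TensorProduct.algebraMap_apply' e).symm
  calc ((1 : Dt p R c d) ⊗ₜ[R] w - w ⊗ₜ[R] (1 : Dt p R c d)) ^ p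
      = ((1 : Dt p R c d) ⊗ₜ[R] w) ^ p - (w ⊗ₜ[R] (1 : Dt p R c d)) ^ p :=
        fsub hp (pzero p R (Dt p R c d ⊗[R] Dt p R c d))
          ((1 : Dt p R c d) ⊗ₜ[R] w) (w ⊗ₜ[R] (1 : Dt p R c d))
    _ = (((1 : Dt p R c d) ^ p) ⊗ₜ[R] (w ^ p)) -
        ((w ^ p) ⊗ₜ[R] ((1 : Dt p R c d) ^ p)) :=
      congrArg₂ (· - ·) (Algebra.TensorProduct.tmul_pow _ _ p)
        (Algebra.TensorProduct.tmul_pow _ _ p)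
    _ = ((1 : Dt p R c d) ⊗ₜ[R] algebraMap R (Dt p R c d) e) -
        (algebraMap R (Dt p R c d) e ⊗ₜ[R] (1 : Dt p R c d)) := by
      rw [hw, one_pow]
    _ = 0 := by rw [h1, sub_self]

theorem ε'r_ker (hp : p.Prime) (hu : IsUnit (a ^ p + lam ^ p * c)) : ∀ q ∈ Ideal.span ({MvPolynomial.X 0 ^ p, MvPolynomial.X 1 ^ p} :
    Set (MvPolynomial (Fin 2) R)), ε'r p R lam a c d hp hu q = 0 := by
  intro q hq
  have hle : Ideal.span ({MvPolynomial.X 0 ^ p, MvPolynomial.X 1 ^ p} :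
      Set (MvPolynomial (Fin 2) R)) ≤
      RingHom.ker (ε'r p R lam a c d hp hu).toRingHom := by
    rw [Ideal.span_le]
    rintro q (rfl | rfl)
    · show ε'r p R lam a c d hp hu _ = 0
      rw [map_pow, ε'r_X0, ξD]
      have h1 : ((1 : Dt p R c d) ⊗ₜ[R] dU p R c d -
          dU p R c d ⊗ₜ[R] (1 : Dt p R c d)) ^ p = 0 :=
        diff_pow p R c d hp (dU p R c d) c (dU_pow p R c d)
      have h2 : (((1 : Dt p R c d) ⊗ₜ[R] dU p R c d -
            dU p R c d ⊗ₜ[R] (1 : Dt p R c d)) *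
          (betD p R lam a c d hp hu ⊗ₜ[R] (1 : Dt p R c d))) ^ p =
          ((1 : Dt p R c d) ⊗ₜ[R] dU p R c d -
            dU p R c d ⊗ₜ[R] (1 : Dt p R c d)) ^ p *
          (betD p R lam a c d hp hu ⊗ₜ[R] (1 : Dt p R c d)) ^ p :=
        mul_pow ((1 : Dt p R c d) ⊗ₜ[R] dU p R c d -
            dU p R c d ⊗ₜ[R] (1 : Dt p R c d))
          (betD p R lam a c d hp hu ⊗ₜ[R] (1 : Dt p R c d)) p
      refine h2.trans ?_
      rw [h1]
      exact zero_mul ((betD p R lam a c d hp hu ⊗ₜ[R] (1 : Dt p R c d)) ^ p)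
    · show ε'r p R lam a c d hp hu _ = 0
      rw [map_pow, ε'r_X1, ηD]
      have h1 : ((1 : Dt p R c d) ⊗ₜ[R] dV p R c d -
          dV p R c d ⊗ₜ[R] (1 : Dt p R c d)) ^ p = 0 :=
        diff_pow p R c d hp (dV p R c d) d (dV_pow p R c d)
      have h2 : (((1 : Dt p R c d) ⊗ₜ[R] dV p R c d -
            dV p R c d ⊗ₜ[R] (1 : Dt p R c d)) *
          (betD p R lam a c d hp hu ⊗ₜ[R] (1 : Dt p R c d))) ^ p =
          ((1 : Dt p R c d) ⊗ₜ[R] dV p R c d -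
            dV p R c d ⊗ₜ[R] (1 : Dt p R c d)) ^ p *
          (betD p R lam a c d hp hu ⊗ₜ[R] (1 : Dt p R c d)) ^ p :=
        mul_pow ((1 : Dt p R c d) ⊗ₜ[R] dV p R c d -
            dV p R c d ⊗ₜ[R] (1 : Dt p R c d))
          (betD p R lam a c d hp hu ⊗ₜ[R] (1 : Dt p R c d)) p
      refine h2.trans ?_
      rw [h1]
      exact zero_mul ((betD p R lam a c d hp hu ⊗ₜ[R] (1 : Dt p R c d)) ^ p)
  exact hle hq

/-- The second factor of the inverse. -/
def g'Map (hp : p.Prime) (hu : IsUnit (a ^ p + lam ^ p * c)) : Aq p R →ₐ[R] Dt p R c d ⊗[R] Dt p R c d :=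
  Ideal.Quotient.liftₐ _ (ε'r p R lam a c d hp hu) (ε'r_ker p R lam a c d hp hu)

theorem g'Map_X (hp : p.Prime) (hu : IsUnit (a ^ p + lam ^ p * c)) : g'Map p R lam a c d hp hu (aX p R) = ξD p R lam a c d hp hu := by
  rw [← ε'r_X0, g'Map, aX, Ideal.Quotient.liftₐ_apply]; rfl

theorem g'Map_Y (hp : p.Prime) (hu : IsUnit (a ^ p + lam ^ p * c)) : g'Map p R lam a c d hp hu (aY p R) = ηD p R lam a c d hp hu := by
  rw [← ε'r_X1, g'Map, aY, Ideal.Quotient.liftₐ_apply]; rfl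

/-- The inverse map `r̃'`. -/
def rt'Map (hp : p.Prime) (hu : IsUnit (a ^ p + lam ^ p * c)) : Dt p R c d ⊗[R] Aq p R →ₐ[R] Dt p R c d ⊗[R] Dt p R c d :=
  productMap (S := Dt p R c d ⊗[R] Dt p R c d) (includeLeft : Dt p R c d →ₐ[R] Dt p R c d ⊗[R] Dt p R c d)
    (g'Map p R lam a c d hp hu)

theorem rt'Map_tmul (hp : p.Prime) (hu : IsUnit (a ^ p + lam ^ p * c)) (s : Dt p R c d) (t : Aq p R) :
    rt'Map p R lam a c d hp hu (s ⊗ₜ[R] t) =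
      (s ⊗ₜ[R] (1 : Dt p R c d)) * g'Map p R lam a c d hp hu t :=
  productMap_apply_tmul _ _ _ _

theorem rt'Map_left (hp : p.Prime) (hu : IsUnit (a ^ p + lam ^ p * c)) (s : Dt p R c d) :
    rt'Map p R lam a c d hp hu (s ⊗ₜ[R] 1) = s ⊗ₜ[R] 1 := by
  rw [rt'Map_tmul, map_one]; exact mul_one (s ⊗ₜ[R] (1 : Dt p R c d))

theorem rt'Map_X (hp : p.Prime) (hu : IsUnit (a ^ p + lam ^ p * c)) : rt'Map p R lam a c d hp hu ((1 : Dt p R c d) ⊗ₜ[R] aX p R) =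
    ξD p R lam a c d hp hu := by
  rw [rt'Map_tmul, g'Map_X, ← one_def]; exact one_mul (ξD p R lam a c d hp hu)

theorem rt'Map_Y (hp : p.Prime) (hu : IsUnit (a ^ p + lam ^ p * c)) : rt'Map p R lam a c d hp hu ((1 : Dt p R c d) ⊗ₜ[R] aY p R) =
    ηD p R lam a c d hp hu := by
  rw [rt'Map_tmul, g'Map_Y, ← one_def]; exact one_mul (ηD p R lam a c d hp hu)

theorem cancel (hp : p.Prime) (hu : IsUnit (a ^ p + lam ^ p * c)) : (alD p R lam a c d ⊗ₜ[R] (1 : Dt p R c d)) *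
    (betD p R lam a c d hp hu ⊗ₜ[R] (1 : Dt p R c d)) = 1 := by
  rw [tmul_mul_tmul, alD_mul_betD, mul_one, ← one_def]

theorem alD_mul_ξD (hp : p.Prime) (hu : IsUnit (a ^ p + lam ^ p * c)) : (alD p R lam a c d ⊗ₜ[R] (1 : Dt p R c d)) *
    ξD p R lam a c d hp hu =
      (1 : Dt p R c d) ⊗ₜ[R] dU p R c d - dU p R c d ⊗ₜ[R] 1 := by
  rw [ξD]
  exact (mul_left_comm (alD p R lam a c d ⊗ₜ[R] (1 : Dt p R c d))
      ((1 : Dt p R c d) ⊗ₜ[R] dU p R c d - dU p R c d ⊗ₜ[R] 1)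
      (betD p R lam a c d hp hu ⊗ₜ[R] (1 : Dt p R c d))).trans
    ((congrArg (((1 : Dt p R c d) ⊗ₜ[R] dU p R c d - dU p R c d ⊗ₜ[R] 1) * ·)
        (cancel p R lam a c d hp hu)).trans
      (mul_one ((1 : Dt p R c d) ⊗ₜ[R] dU p R c d - dU p R c d ⊗ₜ[R] 1)))

theorem alD_mul_ηD (hp : p.Prime) (hu : IsUnit (a ^ p + lam ^ p * c)) : (alD p R lam a c d ⊗ₜ[R] (1 : Dt p R c d)) *
    ηD p R lam a c d hp hu =
      (1 : Dt p R c d) ⊗ₜ[R] dV p R c d - dV p R c d ⊗ₜ[R] 1 := by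
  rw [ηD]
  exact (mul_left_comm (alD p R lam a c d ⊗ₜ[R] (1 : Dt p R c d))
      ((1 : Dt p R c d) ⊗ₜ[R] dV p R c d - dV p R c d ⊗ₜ[R] 1)
      (betD p R lam a c d hp hu ⊗ₜ[R] (1 : Dt p R c d))).trans
    ((congrArg (((1 : Dt p R c d) ⊗ₜ[R] dV p R c d - dV p R c d ⊗ₜ[R] 1) * ·)
        (cancel p R lam a c d hp hu)).trans
      (mul_one ((1 : Dt p R c d) ⊗ₜ[R] dV p R c d - dV p R c d ⊗ₜ[R] 1)))

theorem comp_left (hp : p.Prime) (hu : IsUnit (a ^ p + lam ^ p * c)) : (rt'Map p R lam a c d hp hu).comp (rtMap p R lam a c d hp) =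
    AlgHom.id R (Dt p R c d ⊗[R] Dt p R c d) := by
  apply Algebra.TensorProduct.ext
  · apply Ideal.Quotient.algHom_ext
    apply MvPolynomial.algHom_ext
    intro i
    fin_cases i <;>
      · show rt'Map p R lam a c d hp hu (rtMap p R lam a c d hp
          ((Ideal.Quotient.mk _ (MvPolynomial.X _)) ⊗ₜ[R] 1)) = _
        rw [rtMap_left, rt'Map_left]
        rfl
  · apply Ideal.Quotient.algHom_ext
    apply MvPolynomial.algHom_ext
    intro i
    fin_cases i
    · show rt'Map p R lam a c d hp hu (rtMap p R lam a c d hp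
        ((1 : Dt p R c d) ⊗ₜ[R] dU p R c d)) = (1 : Dt p R c d) ⊗ₜ[R] dU p R c d
      rw [rtMap_U, map_add, rt'Map_left, rt'Map_tmul, g'Map_X, alD_mul_ξD]
      ring
    · show rt'Map p R lam a c d hp hu (rtMap p R lam a c d hp
        ((1 : Dt p R c d) ⊗ₜ[R] dV p R c d)) = (1 : Dt p R c d) ⊗ₜ[R] dV p R c d
      rw [rtMap_V, map_add, rt'Map_left, rt'Map_tmul, g'Map_Y, alD_mul_ηD]
      ring

theorem comp_right (hp : p.Prime) (hu : IsUnit (a ^ p + lam ^ p * c)) : (rtMap p R lam a c d hp).comp (rt'Map p R lam a c d hp hu) =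
    AlgHom.id R (Dt p R c d ⊗[R] Aq p R) := by
  apply Algebra.TensorProduct.ext
  · apply Ideal.Quotient.algHom_ext
    apply MvPolynomial.algHom_ext
    intro i
    fin_cases i <;>
      · show rtMap p R lam a c d hp (rt'Map p R lam a c d hp hu
          ((Ideal.Quotient.mk _ (MvPolynomial.X _)) ⊗ₜ[R] 1)) = _
        rw [rt'Map_left, rtMap_left]
        rfl
  · apply Ideal.Quotient.algHom_ext
    apply MvPolynomial.algHom_ext
    intro i
    fin_cases i
    · show rtMap p R lam a c d hp (rt'Map p R lam a c d hp hu
        ((1 : Dt p R c d) ⊗ₜ[R] aX p R)) = (1 : Dt p R c d) ⊗ₜ[R] aX p R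
      rw [rt'Map_X, ξD, map_mul, map_sub, rtMap_U, rtMap_left, rtMap_left,
        add_sub_cancel_left, tmul_mul_tmul, alD_mul_betD, mul_one]
    · show rtMap p R lam a c d hp (rt'Map p R lam a c d hp hu
        ((1 : Dt p R c d) ⊗ₜ[R] aY p R)) = (1 : Dt p R c d) ⊗ₜ[R] aY p R
      rw [rt'Map_Y, ηD, map_mul, map_sub, rtMap_V, rtMap_left, rtMap_left,
        add_sub_cancel_left, tmul_mul_tmul, alD_mul_betD, mul_one]

end Main

end Stmt13Aux

open Stmt13Aux in
theorem stmt13 (p : ℕ) (hp : p.Prime) (R : Type*) [CommRing R] [CharP R p]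
    (lam a c d : R) (hu : IsUnit (a ^ p + lam ^ p * c)) :
    ∃ (rt : Dt p R c d ⊗[R] Dt p R c d →ₐ[R] Dt p R c d ⊗[R] Aq p R)
      (rt' : Dt p R c d ⊗[R] Aq p R →ₐ[R] Dt p R c d ⊗[R] Dt p R c d),
      rt (dU p R c d ⊗ₜ 1) = dU p R c d ⊗ₜ 1 ∧
      rt (dV p R c d ⊗ₜ 1) = dV p R c d ⊗ₜ 1 ∧
      rt (1 ⊗ₜ dU p R c d) = dU p R c d ⊗ₜ 1 +
        (algebraMap R (Dt p R c d) a +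
          algebraMap R (Dt p R c d) lam * dU p R c d) ⊗ₜ aX p R ∧
      rt (1 ⊗ₜ dV p R c d) = dV p R c d ⊗ₜ 1 +
        (algebraMap R (Dt p R c d) a +
          algebraMap R (Dt p R c d) lam * dU p R c d) ⊗ₜ aY p R ∧
      Function.Bijective rt ∧
      rt' (dU p R c d ⊗ₜ 1) = dU p R c d ⊗ₜ 1 ∧
      rt' (dV p R c d ⊗ₜ 1) = dV p R c d ⊗ₜ 1 ∧
      ((algebraMap R (Dt p R c d) a +
            algebraMap R (Dt p R c d) lam * dU p R c d) ⊗ₜ[R] (1 : Dt p R c d)) *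
          rt' (1 ⊗ₜ aX p R)
        = 1 ⊗ₜ dU p R c d - dU p R c d ⊗ₜ 1 ∧
      ((algebraMap R (Dt p R c d) a +
            algebraMap R (Dt p R c d) lam * dU p R c d) ⊗ₜ[R] (1 : Dt p R c d)) *
          rt' (1 ⊗ₜ aY p R)
        = 1 ⊗ₜ dV p R c d - dV p R c d ⊗ₜ 1 ∧
      rt'.comp rt = AlgHom.id R _ ∧ rt.comp rt' = AlgHom.id R _ := by
  refine ⟨rtMap p R lam a c d hp, rt'Map p R lam a c d hp hu,
    rtMap_left p R lam a c d hp _, rtMap_left p R lam a c d hp _, ?_, ?_, ?_,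
    rt'Map_left p R lam a c d hp hu _, rt'Map_left p R lam a c d hp hu _, ?_, ?_,
    comp_left p R lam a c d hp hu, comp_right p R lam a c d hp hu⟩
  · rw [rtMap_U]; rfl
  · rw [rtMap_V]; rfl
  · exact Function.bijective_iff_has_inverse.2
      ⟨rt'Map p R lam a c d hp hu,
        fun z => AlgHom.congr_fun (comp_left p R lam a c d hp hu) z,
        fun z => AlgHom.congr_fun (comp_right p R lam a c d hp hu) z⟩
  · rw [rt'Map_X]; exact alD_mul_ξD p R lam a c d hp hu
  · rw [rt'Map_Y]; exact alD_mul_ηD p R lam a c d hp hu
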